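/- Let $\bar\rho \in C^1([0,L])$ with $\bar\rho > 0$ and $\bar\rho' \le 0$, $U \in C^2([0,L],\mathbb{R})$ with $U'(z) \ne 0$ for all $z$, $g > 0$, and suppose the Richardson number $\mathrm{Ri}(z) = -g\bar\rho'(z)/(\bar\rho(z)U'(z)^2)$ satisfies $\mathrm{Ri}(z) \ge 1/4$ for all $z \in [0,L]$. Let $k \ne 0$, $s \in \mathbb{C}$ with $\mathrm{Re}(s) \ne 0$, $\gamma(z) = s + ikU(z)$, and let $v \in C^2([0,L],\mathbb{C})$ satisfy $v(0)=v(L)=0$ and the modified Taylor-Goldstein equation $-(\bar\rho\gamma v')' + k^2\bar\rho\gamma v + (ik/2)(\bar\rho U')' v + (\bar\rho\gamma'^2/(4\gamma) - k^2 g\bar\rho'/\gamma)v = 0$. Then $v \equiv 0$. -/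

import Mathlib

open Set

private lemma mh_aux_re (a b u' c k g : ℝ) (γ s V W : ℂ) (hγ : γ.re = s.re)
    (hN : Complex.normSq γ ≠ 0) :
    (((k^2 : ℂ) * a * γ * V + (Complex.I * k / 2) * (c:ℂ) * V
        + ((a:ℂ) * (Complex.I * k * (u':ℂ))^2 / (4 * γ) - ((k^2*g : ℝ):ℂ) * (b:ℂ) / γ) * V)
        * star V + (a:ℂ) * γ * W * star W).re
    = s.re * (a * (Complex.normSq W + k^2 * Complex.normSq V)
        + k^2 * (-a * u'^2/4 - g*b) * Complex.normSq V / Complex.normSq γ) := by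
  have h4 : Complex.normSq (4 * γ) = 16 * Complex.normSq γ := by
    simp [Complex.normSq_mul]; norm_num
  simp only [Complex.add_re, Complex.sub_re, Complex.mul_re, Complex.div_re, Complex.mul_im,
    Complex.div_im, Complex.sub_im, Complex.add_im, Complex.I_re, Complex.I_im,
    Complex.ofReal_re, Complex.ofReal_im, RCLike.star_def, Complex.conj_re, Complex.conj_im,
    Complex.normSq_mul, pow_two, h4]
  simp only [Complex.normSq_ofNat, Complex.re_ofNat, Complex.im_ofNat]
  rw [← hγ]
  rw [show Complex.normSq V = V.re * V.re + V.im * V.im from Complex.normSq_apply V,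
      show Complex.normSq W = W.re * W.re + W.im * W.im from Complex.normSq_apply W]
  field_simp
  ring_nf

theorem miles_howard_criterion
    (L : ℝ) (hL : 0 < L) (ρ : ℝ → ℝ) (hρ : ContDiff ℝ 1 ρ)
    (hρpos : ∀ z ∈ Icc (0:ℝ) L, 0 < ρ z)
    (hρ' : ∀ z ∈ Icc (0:ℝ) L, deriv ρ z ≤ 0)
    (U : ℝ → ℝ) (hU : ContDiff ℝ 2 U)
    (hU' : ∀ z ∈ Icc (0:ℝ) L, deriv U z ≠ 0)
    (g : ℝ) (hg : 0 < g)
    (hRi : ∀ z ∈ Icc (0:ℝ) L, (1:ℝ)/4 ≤ -(g * deriv ρ z) / (ρ z * (deriv U z)^2))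
    (k : ℝ) (hk : k ≠ 0) (s : ℂ) (hs : s.re ≠ 0)
    (v : ℝ → ℂ) (hv : ContDiff ℝ 2 v)
    (hbc0 : v 0 = 0) (hbcL : v L = 0)
    (heq : ∀ z ∈ Icc (0:ℝ) L,
      -(deriv (fun w => (ρ w : ℂ) * (s + Complex.I * k * (U w : ℂ)) * deriv v w) z)
        + (k^2 : ℂ) * (ρ z : ℂ) * (s + Complex.I * k * (U z : ℂ)) * v z
        + (Complex.I * k / 2) * ((deriv (fun w => ρ w * deriv U w) z : ℝ) : ℂ) * v z
        + ((ρ z : ℂ) * (Complex.I * k * ((deriv U z : ℝ) : ℂ))^2 / (4 * (s + Complex.I * k * (U z : ℂ)))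
            - ((k^2 * g : ℝ) : ℂ) * ((deriv ρ z : ℝ) : ℂ) / (s + Complex.I * k * (U z : ℂ))) * v z
        = 0) :
    ∀ z ∈ Icc (0:ℝ) L, v z = 0 := by
  -- notation
  set γ : ℝ → ℂ := fun z => s + Complex.I * k * (U z : ℂ) with hγdef
  set w : ℝ → ℂ := fun z => (ρ z : ℂ) * γ z * deriv v z with hwdef
  -- smoothness facts
  have hv2 : ContDiff ℝ (1 + 1 : ℕ) v := by exact_mod_cast hv
  have hv1 : ContDiff ℝ 1 (deriv v) := (contDiff_succ_iff_deriv.mp hv2).2.2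
  have hvd : Differentiable ℝ v := hv.differentiable two_ne_zero
  have hρC : ContDiff ℝ 1 (fun z => ((ρ z : ℝ) : ℂ)) := Complex.ofRealCLM.contDiff.comp hρ
  have hUC : ContDiff ℝ 1 (fun z => ((U z : ℝ) : ℂ)) :=
    Complex.ofRealCLM.contDiff.comp (hU.of_le one_le_two)
  have hγC : ContDiff ℝ 1 γ := contDiff_const.add (contDiff_const.mul hUC)
  have hwC : ContDiff ℝ 1 w := (hρC.mul hγC).mul hv1
  have hwd : Differentiable ℝ w := hwC.differentiable one_ne_zero
  have hw' : Continuous (deriv w) := hwC.continuous_deriv le_rfl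
  -- γ never vanishes
  have hγre : ∀ z, (γ z).re = s.re := by
    intro z; simp [hγdef]
  have hN : ∀ z, Complex.normSq (γ z) ≠ 0 := by
    intro z
    refine (Complex.normSq_pos.mpr ?_).ne'
    intro h
    exact hs (by rw [← hγre z, h]; simp)
  -- the integrand
  set f : ℝ → ℂ := fun z => deriv w z * star (v z) + w z * star (deriv v z) with hfdef
  have hf : ∀ x, HasDerivAt (fun z => w z * star (v z)) (f x) x := by
    intro x
    exact ((hwd x).hasDerivAt).mul ((hvd x).hasDerivAt.star)
  have hfc : Continuous f :=
    (hw'.mul (continuous_star.comp hv.continuous)).add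
      (hwC.continuous.mul (continuous_star.comp hv1.continuous))
  have hfi : IntervalIntegrable f MeasureTheory.volume 0 L := hfc.intervalIntegrable _ _
  have hint : ∫ z in (0:ℝ)..L, f z = 0 := by
    rw [intervalIntegral.integral_eq_sub_of_hasDerivAt (fun x _ => hf x) hfi]
    simp [hbc0, hbcL]
  have hre0 : ∫ z in (0:ℝ)..L, (f z).re = 0 := by
    have h := Complex.reCLM.intervalIntegral_comp_comm hfi
    rw [hint] at h
    simpa using h
  -- real-valued nonnegative integrand
  set H : ℝ → ℝ := fun z => ρ z * (Complex.normSq (deriv v z) + k^2 * Complex.normSq (v z))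
      + k^2 * (-(ρ z) * (deriv U z)^2/4 - g * deriv ρ z) * Complex.normSq (v z)
        / Complex.normSq (γ z) with hHdef
  have key : ∀ z ∈ Icc (0:ℝ) L, (f z).re = s.re * H z := by
    intro z hz
    have h1 := heq z hz
    have hA : deriv w z =
        (k^2 : ℂ) * (ρ z : ℂ) * γ z * v z
        + (Complex.I * k / 2) * ((deriv (fun w => ρ w * deriv U w) z : ℝ) : ℂ) * v z
        + ((ρ z : ℂ) * (Complex.I * k * ((deriv U z : ℝ) : ℂ))^2 / (4 * γ z)
            - ((k^2 * g : ℝ) : ℂ) * ((deriv ρ z : ℝ) : ℂ) / γ z) * v z := by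
      linear_combination -h1
    have haux := mh_aux_re (ρ z) (deriv ρ z) (deriv U z)
      (deriv (fun w => ρ w * deriv U w) z) k g (γ z) s (v z) (deriv v z) (hγre z) (hN z)
    rw [show f z = ((k^2 : ℂ) * (ρ z : ℂ) * γ z * v z
        + (Complex.I * k / 2) * ((deriv (fun w => ρ w * deriv U w) z : ℝ) : ℂ) * v z
        + ((ρ z : ℂ) * (Complex.I * k * ((deriv U z : ℝ) : ℂ))^2 / (4 * γ z)
            - ((k^2 * g : ℝ) : ℂ) * ((deriv ρ z : ℝ) : ℂ) / γ z) * v z) * star (v z)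
        + (ρ z : ℂ) * γ z * deriv v z * star (deriv v z) from by simp only [hfdef]; rw [hA]]
    exact haux
  -- continuity of H
  have cρ' : Continuous (deriv ρ) := hρ.continuous_deriv le_rfl
  have cU' : Continuous (deriv U) := hU.continuous_deriv one_le_two
  have cN : Continuous (fun z => Complex.normSq (γ z)) :=
    Complex.continuous_normSq.comp hγC.continuous
  have hHc : Continuous H := by
    apply Continuous.add
    · exact hρ.continuous.mul ((Complex.continuous_normSq.comp hv1.continuous).add
        (continuous_const.mul (Complex.continuous_normSq.comp hv.continuous)))
    · refine Continuous.div ?_ cN hN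
      exact (continuous_const.mul
        (((hρ.continuous.neg.mul (cU'.pow 2)).div_const 4).sub
          (continuous_const.mul cρ'))).mul (Complex.continuous_normSq.comp hv.continuous)
  -- nonnegativity of H on [0, L]
  have hcoeff : ∀ x ∈ Icc (0:ℝ) L, 0 ≤ -(ρ x) * (deriv U x)^2/4 - g * deriv ρ x := by
    intro x hx
    have hden : 0 < ρ x * (deriv U x)^2 := by
      have h1 := hρpos x hx
      have h2 : (deriv U x)^2 > 0 := pow_pos (abs_pos.mpr (hU' x hx)) 2 |>.trans_eq (by rw [sq_abs])
      positivity
    have hq := (le_div_iff₀ hden).mp (hRi x hx)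
    linarith
  have hHnn : ∀ x ∈ Icc (0:ℝ) L, 0 ≤ H x := by
    intro x hx
    have h1 : 0 ≤ ρ x * (Complex.normSq (deriv v x) + k^2 * Complex.normSq (v x)) := by
      have := hρpos x hx
      have n1 := Complex.normSq_nonneg (deriv v x)
      have n2 := Complex.normSq_nonneg (v x)
      positivity
    have h2 : 0 ≤ k^2 * (-(ρ x) * (deriv U x)^2/4 - g * deriv ρ x) * Complex.normSq (v x)
        / Complex.normSq (γ x) := by
      have hc := hcoeff x hx
      have n2 := Complex.normSq_nonneg (v x)
      have nN := Complex.normSq_nonneg (γ x)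
      have : 0 ≤ k^2 := sq_nonneg k
      apply div_nonneg _ nN
      apply mul_nonneg (mul_nonneg this hc) n2
    rw [hHdef]
    exact add_nonneg h1 h2
  -- the integral of H vanishes
  have hintH : ∫ z in (0:ℝ)..L, H z = 0 := by
    have h2 : ∫ z in (0:ℝ)..L, (f z).re = ∫ z in (0:ℝ)..L, s.re * H z := by
      apply intervalIntegral.integral_congr
      rw [uIcc_of_le hL.le]
      exact fun z hz => key z hz
    rw [hre0, intervalIntegral.integral_const_mul] at h2
    exact (mul_eq_zero.mp h2.symm).resolve_left hs
  -- conclusion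
  intro z hz
  by_contra hvz
  have hpos : 0 < ∫ z in (0:ℝ)..L, H z := by
    apply intervalIntegral.integral_pos hL hHc.continuousOn
      (fun x hx => hHnn x ⟨hx.1.le, hx.2⟩)
    refine ⟨z, hz, ?_⟩
    have h2 : 0 < ρ z * (Complex.normSq (deriv v z) + k^2 * Complex.normSq (v z)) := by
      have := hρpos z hz
      have n1 := Complex.normSq_nonneg (deriv v z)
      have n2 : 0 < Complex.normSq (v z) := Complex.normSq_pos.mpr hvz
      have hk2 : 0 < k^2 := by positivity
      have hx : 0 < k^2 * Complex.normSq (v z) := mul_pos hk2 n2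
      have hy : 0 < Complex.normSq (deriv v z) + k^2 * Complex.normSq (v z) := by linarith
      exact mul_pos this hy
    have h3 : 0 ≤ k^2 * (-(ρ z) * (deriv U z)^2/4 - g * deriv ρ z) * Complex.normSq (v z)
        / Complex.normSq (γ z) := by
      have hc := hcoeff z hz
      have n2 := Complex.normSq_nonneg (v z)
      have nN := Complex.normSq_nonneg (γ z)
      have : 0 ≤ k^2 := sq_nonneg k
      apply div_nonneg _ nN
      apply mul_nonneg (mul_nonneg this hc) n2
    rw [hHdef]
    exact add_pos_of_pos_of_nonneg h2 h3
  linarith [hintH]
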